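/- Let H be a complex Hilbert space and let B be a bounded linear operator on H such that Re ⟪f, B f⟫ ≤ 0 for all f ∈ H. Then for every real x ≥ 0, the operator exponential exp(x • B) satisfies ‖exp(x • B)‖ ≤ 1. -/

import Mathlib

open NormedSpace

/-- Lumer–Phillips contraction estimate for bounded operators: if the numerical range of a
bounded operator `B` on a complex Hilbert space lies in the closed left half plane, then
the semigroup `x ↦ exp (x • B)` is contractive for `x ≥ 0`. -/
theorem exp_norm_le_one_of_dissipative {H : Type*} [NormedAddCommGroup H]
    [InnerProductSpace ℂ H] [CompleteSpace H] (B : H →L[ℂ] H)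
    (hB : ∀ f : H, (inner ℂ f (B f) : ℂ).re ≤ 0) :
    ∀ x : ℝ, 0 ≤ x → ‖NormedSpace.exp (x • B)‖ ≤ 1 := by
  intro x hx
  have hexp : ∀ t : ℝ, exp (t • B) = exp (t • B) := fun t =>
    rfl
  apply ContinuousLinearMap.opNorm_le_bound _ zero_le_one
  intro f
  rw [one_mul]
  -- the trajectory
  set u : ℝ → H := fun t => exp (t • B) f with hu
  have hderiv : ∀ t : ℝ, HasDerivAt u (B (u t)) t := by
    intro t
    have h1 : HasDerivAt (fun s : ℝ => exp (s • B)) (B * exp (t • B)) t :=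
      hasDerivAt_exp_smul_const' (𝕂 := ℝ) B t
    have h2 := ((ContinuousLinearMap.apply ℂ H f).restrictScalars ℝ).hasFDerivAt.comp_hasDerivAt
      t h1
    exact h2
  -- the squared norm
  set g : ℝ → ℝ := fun t => (inner ℂ (u t) (u t) : ℂ).re with hg
  have hgderiv : ∀ t : ℝ, HasDerivAt g
      ((inner ℂ (u t) (B (u t)) : ℂ) + (inner ℂ (B (u t)) (u t) : ℂ)).re t := by
    intro t
    have h1 : HasDerivAt (fun t => (inner ℂ (u t) (u t) : ℂ))
        ((inner ℂ (u t) (B (u t)) : ℂ) + (inner ℂ (B (u t)) (u t) : ℂ)) t :=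
      HasDerivAt.inner ℂ (hderiv t) (hderiv t)
    exact (Complex.reCLM.hasFDerivAt.comp_hasDerivAt t h1)
  have hgderiv' : ∀ t : ℝ, deriv g t ≤ 0 := by
    intro t
    rw [(hgderiv t).deriv]
    have h1 : ((inner ℂ (B (u t)) (u t) : ℂ)).re = ((inner ℂ (u t) (B (u t)) : ℂ)).re := by
      simpa using (inner_re_symm (𝕜 := ℂ) (u t) (B (u t))).symm
    have := hB (u t)
    simp only [Complex.add_re, h1]
    linarith
  have hmono : Antitone g :=
    antitone_of_deriv_nonpos (fun t => (hgderiv t).differentiableAt) hgderiv'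
  have h0 : g 0 = ‖f‖ ^ 2 := by
    simp only [hg, hu, zero_smul, exp_zero, ContinuousLinearMap.one_apply]
    simpa using inner_self_eq_norm_sq (𝕜 := ℂ) f
  have hx2 : g x ≤ ‖f‖ ^ 2 := h0 ▸ hmono hx
  have hgx : g x = ‖u x‖ ^ 2 := by simpa [hg] using inner_self_eq_norm_sq (𝕜 := ℂ) (u x)
  have : ‖u x‖ ^ 2 ≤ ‖f‖ ^ 2 := hgx ▸ hx2
  have hnorm : ‖u x‖ ≤ ‖f‖ := by
    nlinarith [norm_nonneg (u x), norm_nonneg f]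
  calc ‖exp (x • B) f‖ = ‖u x‖ := by rw [hexp x]
    _ ≤ ‖f‖ := hnorm
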